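/- Let G be a finite group and H, K subgroups of G. The Weyl group W_G K = N_G(K)/K acts freely on (G/K)^H from the right by gK · nK = gnK; consequently |W_G K| divides |(G/K)^H|. -/

import Mathlib

open MulAction

section Aux

lemma weylaux_conj_mem {G : Type} [Group G] {K : Subgroup G} (m : Subgroup.normalizer (K : Set G))
    {x : G} (hx : x ∈ K) : (m : G)⁻¹ * x * (m : G) ∈ K := by
  have := (Subgroup.mem_normalizer_iff.mp (inv_mem m.2) x).mp hx
  simpa using this

/-- The map `gK ↦ g n⁻¹ K` on `G ⧸ K`, for `n` in the normalizer of `K`. -/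
def weylaux_smulFun {G : Type} [Group G] (K : Subgroup G) (n : Subgroup.normalizer (K : Set G)) :
    G ⧸ K → G ⧸ K :=
  Quotient.map' (· * (n : G)⁻¹) (by
    intro a b hab
    have hab' : a⁻¹ * b ∈ K := QuotientGroup.leftRel_apply.mp hab
    refine QuotientGroup.leftRel_apply.mpr ?_
    have : (n : G) * (a⁻¹ * b) * (n : G)⁻¹ ∈ K := by
      have := weylaux_conj_mem ⟨(n : G)⁻¹, inv_mem n.2⟩ hab'
      simpa using this
    simpa [mul_assoc] using this)

lemma weylaux_smulFun_mk {G : Type} [Group G] (K : Subgroup G) (n : Subgroup.normalizer (K : Set G)) (g : G) :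
    weylaux_smulFun K n (g : G ⧸ K) = ((g * (n : G)⁻¹ : G) : G ⧸ K) := rfl

/-- Fixed points are preserved. -/
lemma weylaux_mem_fixedPoints {G : Type} [Group G] {H K : Subgroup G} (n : Subgroup.normalizer (K : Set G))
    {x : G ⧸ K} (hx : x ∈ fixedPoints H (G ⧸ K)) :
    weylaux_smulFun K n x ∈ fixedPoints H (G ⧸ K) := by
  intro h
  induction x using QuotientGroup.induction_on with
  | H g =>
    have hg : ((h : G) * g : G) = (g : G ⧸ K) := hx h
    have hg' : g⁻¹ * ((h : G) * g) ∈ K := by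
      rw [← QuotientGroup.eq]; exact hg.symm
    rw [weylaux_smulFun_mk]
    show (((h : G) * (g * (n : G)⁻¹) : G) : G ⧸ K) = _
    rw [QuotientGroup.eq]
    have : (n : G) * (g⁻¹ * ((h : G)⁻¹ * g)) * (n : G)⁻¹ ∈ K := by
      have := weylaux_conj_mem ⟨(n : G)⁻¹, inv_mem n.2⟩ (inv_mem hg')
      simpa [mul_inv_rev, mul_assoc] using this
    simpa [mul_assoc] using this

/-- The action of the Weyl group `N_G(K) ⧸ K` on the `H`-fixed points of `G ⧸ K`. -/
noncomputable def weylaux_mulAction {G : Type} [Group G] (H K : Subgroup G) :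
    MulAction (Subgroup.normalizer (K : Set G) ⧸ K.subgroupOf (Subgroup.normalizer (K : Set G)))
      (fixedPoints H (G ⧸ K)) where
  smul w x := Quotient.liftOn' w
    (fun n => ⟨weylaux_smulFun K n x.1, weylaux_mem_fixedPoints n x.2⟩)
    (by
      intro a b hab
      have hab' : a⁻¹ * b ∈ K.subgroupOf (Subgroup.normalizer (K : Set G)) := QuotientGroup.leftRel_apply.mp hab
      have habK : (a : G)⁻¹ * (b : G) ∈ K := hab'
      ext
      show weylaux_smulFun K a x.1 = weylaux_smulFun K b x.1
      induction x.1 using QuotientGroup.induction_on with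
      | H g =>
        rw [weylaux_smulFun_mk, weylaux_smulFun_mk, QuotientGroup.eq]
        have : (a : G) * ((a : G)⁻¹ * (b : G))⁻¹ * (a : G)⁻¹ ∈ K := by
          have := weylaux_conj_mem ⟨(a : G)⁻¹, inv_mem a.2⟩ (inv_mem habK)
          simpa using this
        simpa [mul_assoc, mul_inv_rev] using this)
  one_smul x := by
    ext
    show weylaux_smulFun K 1 x.1 = x.1
    induction x.1 using QuotientGroup.induction_on with
    | H g => simp [weylaux_smulFun_mk]
  mul_smul w₁ w₂ x := by
    induction w₁ using QuotientGroup.induction_on with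
    | H n₁ =>
      induction w₂ using QuotientGroup.induction_on with
      | H n₂ =>
        ext
        show weylaux_smulFun K (n₁ * n₂) x.1
          = weylaux_smulFun K n₁ (weylaux_smulFun K n₂ x.1)
        induction x.1 using QuotientGroup.induction_on with
        | H g => simp [weylaux_smulFun_mk, mul_assoc]

set_option maxHeartbeats 1000000 in
/-- A free action of a group gives divisibility of cardinalities. -/
lemma weylaux_card_dvd (α β : Type) [Group α] [MulAction α β]
    (h : ∀ b : β, stabilizer α b = ⊥) : Nat.card α ∣ Nat.card β := by
  have e1 : β ≃ Σ ω : orbitRel.Quotient α β, α ⧸ stabilizer α ω.out :=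
    selfEquivSigmaOrbitsQuotientStabilizer α β
  have e2 : ∀ ω : orbitRel.Quotient α β, (α ⧸ stabilizer α ω.out) ≃ α := by
    intro ω
    rw [h ω.out]
    exact QuotientGroup.quotientBot.toEquiv
  have e : β ≃ (orbitRel.Quotient α β) × α :=
    e1.trans ((Equiv.sigmaCongrRight e2).trans
      (Equiv.sigmaEquivProd (orbitRel.Quotient α β) α))
  rw [Nat.card_congr e, Nat.card_prod]
  exact dvd_mul_left _ _

end Aux

/-- For a finite group `G` and subgroups `H, K ≤ G`, the Weyl group
`W_G K = N_G(K)/K` acts freely on `(G/K)^H` from the right by `gK · nK = gnK`;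
consequently `|W_G K|` divides `|(G/K)^H|`.  We state that the formula `gK · nK = gnK`
gives a well-defined action on `(G/K)^H`, that this action is free, and the resulting
divisibility. -/
theorem weyl_acts_freely_on_fixedPoints (G : Type) [Group G] [Finite G]
    (H K : Subgroup G) :
    -- the right action `gK · n = (g*n)K` (for `n` in the normalizer) is well defined on `G/K`
    (∀ (n : Subgroup.normalizer (K : Set G)) (g g' : G), (g : G ⧸ K) = (g' : G ⧸ K) →
        ((g * n : G) : G ⧸ K) = ((g' * n : G) : G ⧸ K)) ∧
    -- it preserves the `H`-fixed points
    (∀ (n : Subgroup.normalizer (K : Set G)) (g : G), (g : G ⧸ K) ∈ fixedPoints H (G ⧸ K) →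
        ((g * n : G) : G ⧸ K) ∈ fixedPoints H (G ⧸ K)) ∧
    -- the induced action of `W_G K = N_G(K)/K` is free: only elements of `K` fix a point
    (∀ (n : Subgroup.normalizer (K : Set G)) (g : G), (g : G ⧸ K) ∈ fixedPoints H (G ⧸ K) →
        ((g * n : G) : G ⧸ K) = (g : G ⧸ K) → (n : G) ∈ K) ∧
    -- hence the order of the Weyl group divides the number of `H`-fixed points
    Nat.card (Subgroup.normalizer (K : Set G) ⧸ K.subgroupOf (Subgroup.normalizer (K : Set G))) ∣
      Nat.card (fixedPoints H (G ⧸ K)) := by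
  refine ⟨?_, ?_, ?_, ?_⟩
  · intro n g g' hgg'
    have hgg'K : g⁻¹ * g' ∈ K := QuotientGroup.eq.mp hgg'
    rw [QuotientGroup.eq]
    have := weylaux_conj_mem n hgg'K
    simpa [mul_assoc, mul_inv_rev] using this
  · intro n g hg
    have := weylaux_mem_fixedPoints (H := H) n⁻¹ hg
    simpa [weylaux_smulFun_mk] using this
  · intro n g _ hfix
    have : (g * (n : G))⁻¹ * g ∈ K := QuotientGroup.eq.mp hfix
    simpa [mul_assoc, mul_inv_rev] using inv_mem this
  · letI := weylaux_mulAction H K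
    refine weylaux_card_dvd _ _ ?_
    intro b
    rw [eq_bot_iff]
    intro w hw
    induction w using QuotientGroup.induction_on with
    | H n =>
      have hb : _ = b := hw
      have hb' : weylaux_smulFun K n b.1 = b.1 := congrArg Subtype.val hb
      obtain ⟨g, hg⟩ := QuotientGroup.mk_surjective b.1
      rw [← hg, weylaux_smulFun_mk, QuotientGroup.eq] at hb'
      have hn : (n : G) ∈ K := by simpa [mul_assoc, mul_inv_rev] using inv_mem hb'
      rw [Subgroup.mem_bot]
      exact (QuotientGroup.eq_one_iff _).mpr hn
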